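/- Let B be a Polish space, F a Polish space, and let E → B be a fiber bundle with model fiber F (i.e., a continuous surjection that is locally trivial with fiber F). Then the total space E is a Polish space. -/

import Mathlib

open Set Filter Topology
open scoped ENNReal

/-- A Gδ subset of a Polish space is Polish. -/
theorem auxGdeltaPolish {X : Type*} [TopologicalSpace X] [PolishSpace X]
    {s : Set (X)} (hs : IsGδ s) : PolishSpace s := by
  haveI : T2Space X := by letI := TopologicalSpace.upgradeIsCompletelyMetrizable X; infer_instance
  obtain ⟨T, hTo, hTc, hsT⟩ := hs
  obtain ⟨U, hU⟩ : ∃ U : ℕ → Set (X), insert univ T = range U :=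
    (hTc.insert univ).exists_eq_range (insert_nonempty _ _)
  have hUo : ∀ n, IsOpen (U n) := by
    intro n
    have : U n ∈ insert univ T := hU ▸ mem_range_self n
    rcases this with h | h
    · rw [h]; exact isOpen_univ
    · exact hTo _ h
  have hsU : s = ⋂ n, U n := by
    rw [hsT, ← sInter_range, ← hU, sInter_insert, univ_inter]
  haveI : ∀ n, PolishSpace (U n) := fun n => (hUo n).polishSpace
  haveI : PolishSpace (∀ n, U n) := inferInstance
  have hmem : ∀ x : s, ∀ n, (x : X) ∈ U n := by
    intro x n
    have h2 : (x : X) ∈ ⋂ n, U n := by rw [← hsU]; exact x.2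
    exact mem_iInter.1 h2 n
  set f : s → ∀ n, U n := fun x n => ⟨(x : X), hmem x n⟩ with hf
  have hfc : Continuous f :=
    continuous_pi fun n => Continuous.subtype_mk continuous_subtype_val _
  have hgc : Continuous fun y : ∀ n, U n => ((y 0 : X)) :=
    (continuous_apply 0).subtype_val
  have hcomp : (fun y : ∀ n, U n => ((y 0 : X))) ∘ f = ((↑) : s → X) := rfl
  have hemb : Topology.IsEmbedding f := by
    apply Topology.IsEmbedding.of_comp hfc hgc
    rw [hcomp]
    exact Topology.IsEmbedding.subtypeVal
  have hrange : range f = ⋂ n, {y : ∀ n, U n | ((y n : X)) = ((y 0 : X))} := by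
    ext y
    simp only [mem_range, mem_iInter, mem_setOf_eq]
    constructor
    · rintro ⟨x, rfl⟩ n; rfl
    · intro h
      have hy0 : ((y 0 : X)) ∈ s := by
        rw [hsU, mem_iInter]
        intro n
        rw [← h n]
        exact (y n).2
      refine ⟨⟨_, hy0⟩, ?_⟩
      funext n
      exact Subtype.ext (h n).symm
  have hclosed : IsClosed (range f) := by
    rw [hrange]
    exact isClosed_iInter fun n =>
      isClosed_eq ((continuous_apply n).subtype_val) ((continuous_apply 0).subtype_val)
  have hce : Topology.IsClosedEmbedding f := ⟨hemb, hclosed⟩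
  exact hce.polishSpace

/-- (Lavrentiev-type theorem) The range of an embedding of a Polish space into a
metric space is a Gδ set. -/
theorem auxPolishRangeGdelta {Y X : Type*} [MetricSpace X] [TopologicalSpace Y]
    [PolishSpace Y] {f : Y → X} (hf : Topology.IsEmbedding f) : IsGδ (range f) := by
  letI := TopologicalSpace.upgradeIsCompletelyMetrizable Y
  set T : ℕ → Set (X) := fun n =>
    {x | ∃ U : Set (X), IsOpen U ∧ x ∈ U ∧ EMetric.diam (f ⁻¹' U) ≤ ((n : ℝ≥0∞) + 1)⁻¹} with hT
  have hTo : ∀ n, IsOpen (T n) := by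
    intro n
    rw [isOpen_iff_mem_nhds]
    rintro x ⟨U, hUo, hxU, hUd⟩
    filter_upwards [hUo.mem_nhds hxU] with z hz
    exact ⟨U, hUo, hz, hUd⟩
  have key : range f = closure (range f) ∩ ⋂ n, T n := by
    apply Subset.antisymm
    · refine subset_inter subset_closure ?_
      rintro _ ⟨y, rfl⟩
      rw [mem_iInter]
      intro n
      -- small ball around y
      set r : ℝ≥0∞ := (((n : ℝ≥0∞) + 1) * 2)⁻¹ with hr
      have hrpos : 0 < r := by
        rw [hr, ENNReal.inv_pos]
        exact ENNReal.mul_ne_top (by simp) (by norm_num)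
      have hball : EMetric.ball y r ∈ 𝓝 y := EMetric.ball_mem_nhds y hrpos
      rw [hf.isInducing.nhds_eq_comap, mem_comap] at hball
      obtain ⟨V, hV, hVsub⟩ := hball
      obtain ⟨U, hUV, hUo, hxU⟩ := mem_nhds_iff.1 hV
      refine ⟨U, hUo, hxU, ?_⟩
      calc EMetric.diam (f ⁻¹' U) ≤ EMetric.diam (EMetric.ball y r) :=
            EMetric.diam_mono ((preimage_mono hUV).trans hVsub)
        _ ≤ 2 * r := EMetric.diam_ball
        _ = ((n : ℝ≥0∞) + 1)⁻¹ := by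
            rw [hr, ENNReal.mul_inv (by simp) (by norm_num)]
            rw [← mul_assoc, mul_comm (2 : ℝ≥0∞), mul_assoc,
              ENNReal.mul_inv_cancel (by norm_num) (by norm_num), mul_one]
    · rintro x ⟨hxc, hxT⟩
      -- the filter on Y induced by 𝓝 x is Cauchy
      set l : Filter Y := comap f (𝓝 x) with hl
      haveI hlne : l.NeBot := by
        rw [hl, comap_neBot_iff]
        intro t ht
        rcases mem_closure_iff_nhds.1 hxc t ht with ⟨z, hzt, y, rfl⟩
        exact ⟨y, hzt⟩
      have hcauchy : Cauchy l := by
        refine ⟨hlne, ?_⟩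
        intro u hu
        rcases mem_uniformity_edist.mp hu with ⟨ε, hε, hεu⟩
        obtain ⟨n, hn⟩ : ∃ n : ℕ, ((n : ℝ≥0∞) + 1)⁻¹ < ε := by
          rcases ENNReal.exists_inv_nat_lt (ne_of_gt hε) with ⟨n, hn⟩
          exact ⟨n, lt_of_le_of_lt (ENNReal.inv_le_inv.2 le_self_add) hn⟩
        obtain ⟨U, hUo, hxU, hUd⟩ : x ∈ T n := mem_iInter.1 hxT n
        have hUl : f ⁻¹' U ∈ l := preimage_mem_comap (hUo.mem_nhds hxU)
        refine mem_of_superset (prod_mem_prod hUl hUl) ?_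
        rintro ⟨a, b⟩ ⟨ha, hb⟩
        exact hεu (lt_of_le_of_lt (le_trans (EMetric.edist_le_diam_of_mem ha hb) hUd) hn)
      obtain ⟨y, hy⟩ := CompleteSpace.complete hcauchy
      refine ⟨y, ?_⟩
      have h1 : map f l ≤ 𝓝 (f y) :=
        (map_mono hy).trans (hf.continuous.continuousAt (x := y))
      have h2 : map f l ≤ 𝓝 x := map_comap_le
      haveI : (map f l).NeBot := hlne.map f
      exact (eq_of_nhds_neBot (neBot_of_le (le_inf h2 h1))).symm
  rw [key]
  exact IsGδ.inter isClosed_closure.isGδ (IsGδ.iInter fun n => (hTo n).isGδ)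

/-- The total space of a fiber bundle with Polish base and Polish model fiber is Polish. -/
theorem polishSpace_totalSpace_of_fiberBundle
    {B F : Type*} [TopologicalSpace B] [TopologicalSpace F]
    [PolishSpace B] [PolishSpace F]
    (E : B → Type*) [TopologicalSpace (Bundle.TotalSpace F E)]
    [∀ b, TopologicalSpace (E b)] [FiberBundle F E] :
    PolishSpace (Bundle.TotalSpace F E) := by
  -- each trivialization source is Polish
  have hPolSource : ∀ b : B, PolishSpace ((trivializationAt F E b).source : Set (Bundle.TotalSpace F E)) := by
    intro b
    set e := trivializationAt F E b
    haveI : PolishSpace (e.target : Set (B × F)) := e.open_target.polishSpace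
    exact (e.toPartialHomeomorph.toHomeomorphSourceTarget).isClosedEmbedding.polishSpace
  -- T2
  haveI hT0 : T0Space (Bundle.TotalSpace F E) := by
    refine (t0Space_iff_inseparable (Bundle.TotalSpace F E)).2 fun x y h => ?_
    have hbb : x.proj = y.proj := (h.map (FiberBundle.continuous_proj F E)).eq
    set e := trivializationAt F E x.proj with he
    have hx : x ∈ e.source := e.mem_source.2 (FiberBundle.mem_baseSet_trivializationAt F E x.proj)
    have hy : y ∈ e.source := e.mem_source.2
      (hbb ▸ FiberBundle.mem_baseSet_trivializationAt F E x.proj)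
    haveI := hPolSource x.proj
    haveI : T0Space (e.source : Set (Bundle.TotalSpace F E)) := inferInstance
    have h' : Inseparable (⟨x, hx⟩ : e.source) ⟨y, hy⟩ := by
      rw [inseparable_iff_specializes_and] at h ⊢
      exact ⟨Topology.IsInducing.subtypeVal.specializes_iff.1 h.1,
        Topology.IsInducing.subtypeVal.specializes_iff.1 h.2⟩
    exact congrArg Subtype.val h'.eq
  -- regular
  haveI hreg : RegularSpace (Bundle.TotalSpace F E) := by
    apply RegularSpace.of_exists_mem_nhds_isClosed_subset
    intro a n hn
    set b := a.proj with hb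
    set e := trivializationAt F E b with he
    have hbmem : b ∈ e.baseSet := FiberBundle.mem_baseSet_trivializationAt F E b
    haveI : RegularSpace B := by
      letI := TopologicalSpace.upgradeIsCompletelyMetrizable B
      infer_instance
    obtain ⟨K, hK_nhds, hK_closed, hK_sub⟩ :=
      exists_mem_nhds_isClosed_subset (e.open_baseSet.mem_nhds hbmem)
    have hproj : Continuous (Bundle.TotalSpace.proj : Bundle.TotalSpace F E → B) := FiberBundle.continuous_proj F E
    have hC_closed : IsClosed (Bundle.TotalSpace.proj ⁻¹' K : Set (Bundle.TotalSpace F E)) := hK_closed.preimage hproj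
    have hC_nhds : (Bundle.TotalSpace.proj ⁻¹' K : Set (Bundle.TotalSpace F E)) ∈ 𝓝 a :=
      hproj.continuousAt.preimage_mem_nhds hK_nhds
    have hCS : (Bundle.TotalSpace.proj ⁻¹' K : Set (Bundle.TotalSpace F E)) ⊆ e.source := by
      rw [e.source_eq]; exact preimage_mono hK_sub
    haveI : PolishSpace (e.source : Set (Bundle.TotalSpace F E)) := hPolSource b
    haveI : RegularSpace (e.source : Set (Bundle.TotalSpace F E)) := by
      letI := TopologicalSpace.upgradeIsCompletelyMetrizable (e.source : Set (Bundle.TotalSpace F E))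
      infer_instance
    set a' : e.source := ⟨a, e.mem_source.2 hbmem⟩ with ha'
    have hmem : (Subtype.val ⁻¹' (n ∩ Bundle.TotalSpace.proj ⁻¹' K) : Set e.source) ∈ 𝓝 a' :=
      continuous_subtype_val.continuousAt.preimage_mem_nhds (inter_mem hn hC_nhds)
    obtain ⟨D, hD_nhds, hD_closed, hD_sub⟩ := exists_mem_nhds_isClosed_subset hmem
    refine ⟨Subtype.val '' D, ?_, ?_, ?_⟩
    · have hoe : Topology.IsOpenEmbedding (Subtype.val : e.source → Bundle.TotalSpace F E) :=
        e.open_source.isOpenEmbedding_subtypeVal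
      rw [← hoe.map_nhds_eq a']
      exact image_mem_map hD_nhds
    · -- closedness in X
      obtain ⟨Z, hZ_closed, hZ⟩ := isClosed_induced_iff.1 hD_closed
      have hDZ : Subtype.val '' D ⊆ Z := by
        rw [← hZ]; exact image_preimage_subset _ _
      have hDC : Subtype.val '' D ⊆ Bundle.TotalSpace.proj ⁻¹' K := by
        rintro _ ⟨d, hd, rfl⟩
        exact (hD_sub hd).2
      apply isClosed_of_closure_subset
      intro z hz
      have hzZ : z ∈ Z := (hZ_closed.closure_subset_iff.2 hDZ) hz
      have hzC : z ∈ Bundle.TotalSpace.proj ⁻¹' K := (hC_closed.closure_subset_iff.2 hDC) hz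
      have hzS : z ∈ e.source := hCS hzC
      have : (⟨z, hzS⟩ : e.source) ∈ D := by rw [← hZ]; exact hzZ
      exact ⟨⟨z, hzS⟩, this, rfl⟩
    · rintro _ ⟨d, hd, rfl⟩
      exact (hD_sub hd).1
  haveI hT3 : T3Space (Bundle.TotalSpace F E) := { toT0Space := hT0, toRegularSpace := hreg }
  -- countable cover by trivialization sources
  obtain ⟨S, hS_count, hS_cover⟩ :=
    TopologicalSpace.isOpen_iUnion_countable (fun b : B => (trivializationAt F E b).baseSet)
      (fun b => (trivializationAt F E b).open_baseSet)
  haveI : Countable S := hS_count.to_subtype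
  set V : S → Set (Bundle.TotalSpace F E) := fun i => (trivializationAt F E (i : B)).source with hV
  have hVo : ∀ i, IsOpen (V i) := fun i => (trivializationAt F E (i : B)).open_source
  have hVcover : ⋃ i, V i = univ := by
    apply eq_univ_of_forall
    intro x
    have : x.proj ∈ ⋃ b, (trivializationAt F E b).baseSet :=
      mem_iUnion.2 ⟨x.proj, FiberBundle.mem_baseSet_trivializationAt F E x.proj⟩
    rw [← hS_cover] at this
    obtain ⟨i, hi⟩ := mem_iUnion.1 this
    simp only [mem_iUnion] at hi ⊢
    obtain ⟨hiS, hmem⟩ := hi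
    exact ⟨⟨i, hiS⟩, (trivializationAt F E i).mem_source.2 hmem⟩
  haveI hVpol : ∀ i, PolishSpace (V i) := fun i => hPolSource (i : B)
  haveI : ∀ i, SecondCountableTopology (V i) := fun i => (hVpol i).toSecondCountableTopology
  haveI : SecondCountableTopology (Bundle.TotalSpace F E) := TopologicalSpace.secondCountableTopology_of_countable_cover hVo hVcover
  haveI : TopologicalSpace.MetrizableSpace (Bundle.TotalSpace F E) := TopologicalSpace.metrizableSpace_of_t3_secondCountable _
  letI : MetricSpace (Bundle.TotalSpace F E) := TopologicalSpace.metrizableSpaceMetric _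
  haveI : TopologicalSpace.SeparableSpace (Bundle.TotalSpace F E) := TopologicalSpace.SecondCountableTopology.to_separableSpace
  -- embed into the completion
  set C := UniformSpace.Completion (Bundle.TotalSpace F E) with hC
  haveI : PolishSpace C := inferInstance
  set c : Bundle.TotalSpace F E → C := ((↑) : Bundle.TotalSpace F E → C) with hc
  have hcemb : Topology.IsEmbedding c := (UniformSpace.Completion.isUniformEmbedding_coe (Bundle.TotalSpace F E)).isEmbedding
  -- open sets in the completion matching the cover
  have hW : ∀ i, ∃ W : Set C, IsOpen W ∧ c ⁻¹' W = V i := fun i =>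
    hcemb.isInducing.isOpen_iff.1 (hVo i)
  choose W hWo hWV using hW
  -- each piece is Gδ in the completion
  have hGδ : ∀ i, IsGδ (c '' V i) := by
    intro i
    haveI := hVpol i
    have hemb : Topology.IsEmbedding (fun y : V i => c y) :=
      hcemb.comp Topology.IsEmbedding.subtypeVal
    have : range (fun y : V i => c y) = c '' V i := by
      have h1 : (fun y : V i => c y) = c ∘ (Subtype.val : V i → Bundle.TotalSpace F E) := rfl
      rw [h1, range_comp, Subtype.range_val]
    rw [← this]
    exact auxPolishRangeGdelta hemb
  -- range of c is Gδ
  have hkey : range c = (⋃ i, W i) ∩ ⋂ i, ((W i)ᶜ ∪ c '' V i) := by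
    apply Subset.antisymm
    · rintro _ ⟨x, rfl⟩
      have hx : x ∈ ⋃ i, V i := hVcover ▸ mem_univ x
      obtain ⟨i, hi⟩ := mem_iUnion.1 hx
      constructor
      · exact mem_iUnion.2 ⟨i, by rw [← hWV i] at hi; exact hi⟩
      · rw [mem_iInter]
        intro j
        by_cases hj : c x ∈ W j
        · right
          exact ⟨x, by rw [← hWV j]; exact hj, rfl⟩
        · left; exact hj
    · rintro z ⟨hzW, hzI⟩
      obtain ⟨i, hi⟩ := mem_iUnion.1 hzW
      have := mem_iInter.1 hzI i
      rcases this with h | h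
      · exact absurd hi h
      · obtain ⟨x, _, rfl⟩ := h
        exact ⟨x, rfl⟩
  have hrangeGδ : IsGδ (range c) := by
    rw [hkey]
    exact IsGδ.inter (isOpen_iUnion hWo).isGδ
      (IsGδ.iInter fun i => IsGδ.union (hWo i).isClosed_compl.isGδ (hGδ i))
  haveI : PolishSpace (range c) := auxGdeltaPolish hrangeGδ
  exact (hcemb.toHomeomorph).isClosedEmbedding.polishSpace
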